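/- There are no rational numbers x1,x2,x3,d1,d2,d3 with x1 > 0, x2 > 0, x3 > 0, d1 > 0, d2 > 0, d3 > 0 satisfying the Euler factor equations p̃2 = p̃3 = p̃4 = p̃5 = p̃6 = p̃7 = p̃8 = 0 such that the 3×2 matrix N1 with rows (1, d_i) has rank 2, the 3×2 matrix N2 with rows (1, x_i) has rank 2, and the 3×7 matrix N with rows (1, d_i, x_i, x_i·d_i, x_i², d_i², x_i²·d_i²) has rank N ≤ 2. -/

import Mathlib

open Matrix

-- q^2 = 2 has no rational solution (with u ≠ 0 scaling)
lemma aux_no_sqrt2 (s u : ℚ) (hu : 0 < u) (h : s^2 = 2*u^2) : False := by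
  have hq : (s/u)^2 = 2 := by
    field_simp
    linarith
  set q := s / u with hqdef
  have h2 : ((q : ℝ))^2 = 2 := by exact_mod_cast congrArg (fun r : ℚ => (r : ℝ)) hq
  have hs : Real.sqrt 2 = |(q : ℝ)| := by rw [← h2, Real.sqrt_sq_eq_abs]
  apply irrational_sqrt_two
  rw [hs]
  exact ⟨|q|, Rat.cast_abs q⟩

-- any 3-column minor of a rank ≤ 2 matrix vanishes
lemma aux_minor (A : Matrix (Fin 3) (Fin 7) ℚ) (g : Fin 3 → Fin 7)
    (h : A.rank ≤ 2) : (A.submatrix id g).det = 0 := by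
  by_contra hdet
  have hsub : A.submatrix id g
      = A * (Matrix.of fun k j => if k = g j then (1:ℚ) else 0) := by
    ext i j
    simp [Matrix.mul_apply]
  have hle : (A.submatrix id g).rank ≤ A.rank := by
    rw [hsub]; exact Matrix.rank_mul_le_left _ _
  have hu : IsUnit (A.submatrix id g) :=
    (Matrix.isUnit_iff_isUnit_det _).2 (isUnit_iff_ne_zero.mpr hdet)
  have hr := Matrix.rank_of_isUnit _ hu
  rw [Fintype.card_fin] at hr
  omega

-- all-equal rows means rank ≤ 1
lemma aux_rank_le_one (a b : ℚ) : (!![a, b; a, b; a, b] : Matrix (Fin 3) (Fin 2) ℚ).rank ≤ 1 := by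
  have h : (!![a, b; a, b; a, b] : Matrix (Fin 3) (Fin 2) ℚ)
      = (!![1; 1; 1] : Matrix (Fin 3) (Fin 1) ℚ) * !![a, b] := by
    ext i j
    fin_cases i <;> fin_cases j <;> simp [Matrix.mul_apply, Fin.sum_univ_succ, Matrix.vecHead, Matrix.vecTail]
  rw [h]
  exact (Matrix.rank_mul_le_right _ _).trans
    ((Matrix.rank_le_card_height _).trans (by simp))

theorem no_positive_solution_rank_two_two_euler :
    ¬ ∃ x1 x2 x3 d1 d2 d3 : ℚ,
      0 < x1 ∧
      0 < x2 ∧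
      0 < x3 ∧
      0 < d1 ∧
      0 < d2 ∧
      0 < d3 ∧
      (x2^2 + x3^2 - d1^2) + (x3^2 + x1^2 - d2^2) + (x1^2 + x2^2 - d3^2) = 0 ∧
      d1 * (x2^2 + x3^2 - d1^2) + d2 * (x3^2 + x1^2 - d2^2) + d3 * (x1^2 + x2^2 - d3^2) = 0 ∧
      x1 * (x2^2 + x3^2 - d1^2) + x2 * (x3^2 + x1^2 - d2^2) + x3 * (x1^2 + x2^2 - d3^2) = 0 ∧
      x1 * d1 * (x2^2 + x3^2 - d1^2) + x2 * d2 * (x3^2 + x1^2 - d2^2) + x3 * d3 * (x1^2 + x2^2 - d3^2) = 0 ∧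
      x1^2 * (x2^2 + x3^2 - d1^2) + x2^2 * (x3^2 + x1^2 - d2^2) + x3^2 * (x1^2 + x2^2 - d3^2) = 0 ∧
      d1^2 * (x2^2 + x3^2 - d1^2) + d2^2 * (x3^2 + x1^2 - d2^2) + d3^2 * (x1^2 + x2^2 - d3^2) = 0 ∧
      x1^2 * d1^2 * (x2^2 + x3^2 - d1^2) + x2^2 * d2^2 * (x3^2 + x1^2 - d2^2) + x3^2 * d3^2 * (x1^2 + x2^2 - d3^2) = 0 ∧
      (!![(1:ℚ), d1; 1, d2; 1, d3]).rank = 2 ∧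
      (!![(1:ℚ), x1; 1, x2; 1, x3]).rank = 2 ∧
      (!![(1:ℚ), d1, x1, x1*d1, x1^2, d1^2, x1^2*d1^2;
        1, d2, x2, x2*d2, x2^2, d2^2, x2^2*d2^2;
        1, d3, x3, x3*d3, x3^2, d3^2, x3^2*d3^2]).rank ≤ 2 := by
  rintro ⟨x1, x2, x3, d1, d2, d3, hx1, hx2, hx3, hd1, hd2, hd3,
    h2, h3, h4, h5, h6, h7, h8, hr1, hr2, hrN⟩
  -- the d's are not all equal
  have hall : ¬ (d1 = d2 ∧ d1 = d3) := by
    rintro ⟨rfl, rfl⟩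
    have := aux_rank_le_one 1 d1
    omega
  -- minor [1, d, d²] vanishes
  have m1 := aux_minor _ ![0, 1, 5] hrN
  have e1 : ((!![(1:ℚ), d1, x1, x1*d1, x1^2, d1^2, x1^2*d1^2;
        1, d2, x2, x2*d2, x2^2, d2^2, x2^2*d2^2;
        1, d3, x3, x3*d3, x3^2, d3^2, x3^2*d3^2]).submatrix id ![0, 1, 5])
      = !![1, d1, d1^2; 1, d2, d2^2; 1, d3, d3^2] := by
    ext i j
    fin_cases i <;> fin_cases j <;> rfl
  rw [e1, Matrix.det_fin_three] at m1
  norm_num [Matrix.cons_val_zero, Matrix.cons_val_one, Matrix.cons_val_two, Matrix.head_cons, Matrix.vecHead, Matrix.vecTail] at m1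
  -- minor [1, d, x] vanishes
  have m2 := aux_minor _ ![0, 1, 2] hrN
  have e2 : ((!![(1:ℚ), d1, x1, x1*d1, x1^2, d1^2, x1^2*d1^2;
        1, d2, x2, x2*d2, x2^2, d2^2, x2^2*d2^2;
        1, d3, x3, x3*d3, x3^2, d3^2, x3^2*d3^2]).submatrix id ![0, 1, 2])
      = !![1, d1, x1; 1, d2, x2; 1, d3, x3] := by
    ext i j
    fin_cases i <;> fin_cases j <;> rfl
  rw [e2, Matrix.det_fin_three] at m2
  norm_num [Matrix.cons_val_zero, Matrix.cons_val_one, Matrix.cons_val_two, Matrix.head_cons, Matrix.vecHead, Matrix.vecTail] at m2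
  -- two of the d's must coincide
  have hv : (d1 - d2) * ((d2 - d3) * (d3 - d1)) = 0 := by linear_combination m1
  rcases mul_eq_zero.mp hv with h12 | h'
  · -- d1 = d2
    have hd12 : d1 = d2 := by linarith [sub_eq_zero.mp h12]
    subst hd12
    have hne : d3 ≠ d1 := fun h => hall ⟨rfl, h.symm⟩
    have hx12 : x1 = x2 := by
      have h0 : (d3 - d1) * (x1 - x2) = 0 := by linear_combination m2
      rcases mul_eq_zero.mp h0 with h | h
      · exact absurd (sub_eq_zero.mp h) hne
      · linarith [sub_eq_zero.mp h]
    subst hx12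
    have hc : x1^2 + x1^2 - d3^2 = 0 := by
      have h0 : (d3 - d1) * (x1^2 + x1^2 - d3^2) = 0 := by linear_combination h3 - d1 * h2
      rcases mul_eq_zero.mp h0 with h | h
      · exact absurd (sub_eq_zero.mp h) hne
      · exact h
    exact aux_no_sqrt2 d3 x1 hx1 (by linarith)
  rcases mul_eq_zero.mp h' with h23 | h31
  · -- d2 = d3
    have hd23 : d2 = d3 := by linarith [sub_eq_zero.mp h23]
    subst hd23
    have hne : d1 ≠ d2 := fun h => hall ⟨h, h⟩
    have hx23 : x2 = x3 := by
      have h0 : (d1 - d2) * (x2 - x3) = 0 := by linear_combination m2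
      rcases mul_eq_zero.mp h0 with h | h
      · exact absurd (sub_eq_zero.mp h) hne
      · linarith [sub_eq_zero.mp h]
    subst hx23
    have hc : x2^2 + x2^2 - d1^2 = 0 := by
      have h0 : (d1 - d2) * (x2^2 + x2^2 - d1^2) = 0 := by linear_combination h3 - d2 * h2
      rcases mul_eq_zero.mp h0 with h | h
      · exact absurd (sub_eq_zero.mp h) hne
      · exact h
    exact aux_no_sqrt2 d1 x2 hx2 (by linarith)
  · -- d3 = d1
    have hd31 : d1 = d3 := by linarith [sub_eq_zero.mp h31]
    subst hd31
    have hne : d2 ≠ d1 := fun h => hall ⟨h.symm, rfl⟩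
    have hx13 : x1 = x3 := by
      have h0 : (d2 - d1) * (x3 - x1) = 0 := by linear_combination m2
      rcases mul_eq_zero.mp h0 with h | h
      · exact absurd (sub_eq_zero.mp h) hne
      · linarith [sub_eq_zero.mp h]
    subst hx13
    have hc : x1^2 + x1^2 - d2^2 = 0 := by
      have h0 : (d2 - d1) * (x1^2 + x1^2 - d2^2) = 0 := by linear_combination h3 - d1 * h2
      rcases mul_eq_zero.mp h0 with h | h
      · exact absurd (sub_eq_zero.mp h) hne
      · exact h
    exact aux_no_sqrt2 d2 x1 hx1 (by linarith)
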